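/- Frame the hypotheses of Corollary 1. Define F̄_j = {S ∈ F : max_{u∈S} ||a_u − w_j||_1 ≤ 8μ}. Then F = F̄_1 ∪ ⋯ ∪ F̄_r, and moreover for distinct x, y ∈ R, any S_x ∈ F̄_x and S_y ∈ F̄_y are disjoint as subsets of N. -/

import Mathlib

noncomputable section
open Matrix
open scoped Classical

/-- Entrywise L1 norm of a vector. -/
def l1 {α : Type*} [Fintype α] (v : α → ℝ) : ℝ := ∑ i, |v i|

/-- Induced L1 norm of a matrix (maximum column sum of absolute values). -/
def ml1 {α β : Type*} [Fintype α] [Fintype β] (M : Matrix α β ℝ) : ℝ :=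
  sSup (Set.range fun j => ∑ i, |M i j|)

/-- Feasible set of problem P(A,r). -/
def Feas {ι : Type*} [Fintype ι] [DecidableEq ι] (X : Matrix ι ι ℝ) (r : ℕ) : Prop :=
  Matrix.trace X = (r : ℝ) ∧ (∀ i, X i i ≤ 1) ∧ (∀ i j, 0 ≤ X i j) ∧
    (∀ i j, X i j ≤ X i i)

/-- κ(W) = min over j of min over nonnegative z (supported off j) of
    ‖w_j − W(:,R∖{j}) z‖₁. -/
def kappa {d r : ℕ} (W : Matrix (Fin d) (Fin r) ℝ) : ℝ :=
  sInf {c | ∃ (j : Fin r) (z : Fin r → ℝ), (∀ k, 0 ≤ z k) ∧ z j = 0 ∧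
    c = l1 (fun i => W i j - ∑ k, W i k * z k)}

/-- ω(W) = min over distinct pairs of ‖w_{j₁} − w_{j₂}‖₁. -/
def omegaW {d r : ℕ} (W : Matrix (Fin d) (Fin r) ℝ) : ℝ :=
  sInf {c | ∃ j₁ j₂ : Fin r, j₁ ≠ j₂ ∧ c = l1 (fun i => W i j₁ - W i j₂)}

/-- β = maximum entry of H̄. -/
def betaH {r m : ℕ} (Hb : Matrix (Fin r) (Fin m) ℝ) : ℝ :=
  sSup (Set.range fun p : Fin r × Fin m => Hb p.1 p.2)

/-- L1 distance between columns i and u of A. -/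
def cdist {d : ℕ} {ι : Type*} [Fintype ι] (A : Matrix (Fin d) ι ℝ) (i u : ι) : ℝ :=
  l1 (fun k => A k i - A k u)

/-- Ω_i : the nested family of clusters built from index i by ordering the columns
    of A by L1 distance to a_i (prefixes of such an ordering). -/
def OmegaC {d : ℕ} {ι : Type*} [Fintype ι] (A : Matrix (Fin d) ι ℝ) (i : ι) :
    Set (Finset ι) :=
  {S | i ∈ S ∧ ∀ u ∈ S, ∀ v, v ∉ S → cdist A i u ≤ cdist A i v}

/-- diameter of a cluster S in Ω_i. -/
def diamC {d : ℕ} {ι : Type*} [Fintype ι] (A : Matrix (Fin d) ι ℝ) (i : ι)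
    (S : Finset ι) : ℝ :=
  sSup {x | ∃ u ∈ S, x = cdist A i u}

/-- score of a cluster with respect to a point list. -/
def scoreS {ι : Type*} (S : Finset ι) (p : ι → ℝ) : ℝ := ∑ u ∈ S, p u

/-- F_i(q). -/
def FsetC {d : ℕ} {ι : Type*} [Fintype ι] (A : Matrix (Fin d) ι ℝ) (μ : ℝ) (r : ℕ)
    (q : ι → ℝ) (i : ι) : Set (Finset ι) :=
  {S | S ∈ OmegaC A i ∧ diamC A i S ≤ 3 * μ ∧ (r : ℝ) / (r + 1) < scoreS S q}

/-- G_i(q). -/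
def GsetC {d : ℕ} {ι : Type*} [Fintype ι] (A : Matrix (Fin d) ι ℝ) (r : ℕ)
    (q : ι → ℝ) (i : ι) : Set (Finset ι) :=
  {S | S ∈ OmegaC A i ∧ (r : ℝ) / (r + 1) < scoreS S q}

/-- F̄_j : clusters of F all of whose columns are within 8μ of w_j. -/
def FbarC {d r m : ℕ} (A : Matrix (Fin d) (Fin r ⊕ Fin m) ℝ)
    (W : Matrix (Fin d) (Fin r) ℝ) (μ : ℝ) (q : Fin r ⊕ Fin m → ℝ) (j : Fin r) :
    Set (Finset (Fin r ⊕ Fin m)) :=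
  {S | (∃ i, S ∈ FsetC A μ r q i) ∧ ∀ u ∈ S, l1 (fun k => A k u - W k j) ≤ 8 * μ}


/-! ### Auxiliary lemmas -/

lemma l1_nonneg' {α : Type*} [Fintype α] (v : α → ℝ) : 0 ≤ l1 v :=
  Finset.sum_nonneg fun _ _ => abs_nonneg _

lemma l1_add_le' {α : Type*} [Fintype α] (f g : α → ℝ) :
    l1 (fun i => f i + g i) ≤ l1 f + l1 g := by
  rw [l1, l1, l1, ← Finset.sum_add_distrib]
  exact Finset.sum_le_sum fun i _ => abs_add_le _ _

lemma l1_sub_comm' {α : Type*} [Fintype α] (f g : α → ℝ) :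
    l1 (fun i => f i - g i) = l1 (fun i => g i - f i) := by
  simp [l1, abs_sub_comm]

lemma l1_smul' {α : Type*} [Fintype α] (t : ℝ) (f : α → ℝ) (ht : 0 ≤ t) :
    l1 (fun i => t * f i) = t * l1 f := by
  simp [l1, abs_mul, abs_of_nonneg ht, Finset.mul_sum]

lemma l1_tri' {α : Type*} [Fintype α] (f g h : α → ℝ) :
    l1 (fun i => f i - h i) ≤ l1 (fun i => f i - g i) + l1 (fun i => g i - h i) := by
  simpa using l1_add_le' (fun i => f i - g i) (fun i => g i - h i)

lemma l1_le_of_sub' {α : Type*} [Fintype α] (f g : α → ℝ) :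
    l1 f ≤ l1 g + l1 (fun i => f i - g i) := by
  simpa using l1_add_le' (fun i => g i) (fun i => f i - g i)

lemma l1_sum_le' {α β : Type*} [Fintype α] (s : Finset β) (c : β → ℝ) (x : β → α → ℝ) :
    l1 (fun i => ∑ u ∈ s, c u * x u i) ≤ ∑ u ∈ s, |c u| * l1 (x u) := by
  rw [l1]
  calc ∑ i, |∑ u ∈ s, c u * x u i| ≤ ∑ i, ∑ u ∈ s, |c u * x u i| :=
        Finset.sum_le_sum fun i _ => Finset.abs_sum_le_sum_abs _ _
    _ = ∑ u ∈ s, ∑ i, |c u| * |x u i| := by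
        rw [Finset.sum_comm]; simp [abs_mul]
    _ = ∑ u ∈ s, |c u| * l1 (x u) := by
        simp [l1, Finset.mul_sum]

lemma col_le_ml1' {α β : Type*} [Fintype α] [Fintype β] (M : Matrix α β ℝ) (v : β) :
    l1 (fun i => M i v) ≤ ml1 M :=
  le_csSup (Set.Finite.bddAbove (Set.finite_range _)) ⟨v, rfl⟩

lemma ml1_le' {α β : Type*} [Fintype α] [Fintype β] [Nonempty β] {M : Matrix α β ℝ} {c : ℝ}
    (h : ∀ v, l1 (fun i => M i v) ≤ c) : ml1 M ≤ c :=
  csSup_le (Set.range_nonempty _) (by rintro x ⟨v, rfl⟩; exact h v)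

lemma kappa_nonneg' {d r : ℕ} (W : Matrix (Fin d) (Fin r) ℝ) : 0 ≤ kappa W :=
  Real.sInf_nonneg (by rintro c ⟨j, z, _, _, rfl⟩; exact l1_nonneg' _)

lemma omegaW_nonneg' {d r : ℕ} (W : Matrix (Fin d) (Fin r) ℝ) : 0 ≤ omegaW W :=
  Real.sInf_nonneg (by rintro c ⟨j₁, j₂, _, rfl⟩; exact l1_nonneg' _)

lemma kappa_le' {d r : ℕ} (W : Matrix (Fin d) (Fin r) ℝ) (j : Fin r) (z : Fin r → ℝ)
    (hz : ∀ k, 0 ≤ z k) (hzj : z j = 0) :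
    kappa W ≤ l1 (fun i => W i j - ∑ k, W i k * z k) :=
  csInf_le ⟨0, by rintro c ⟨j', z', _, _, rfl⟩; exact l1_nonneg' _⟩ ⟨j, z, hz, hzj, rfl⟩

lemma kappa_le_one' {d r : ℕ} (W : Matrix (Fin d) (Fin r) ℝ) (j : Fin r)
    (hWcol : ∀ j, l1 (fun i => W i j) = 1) : kappa W ≤ 1 := by
  have := kappa_le' W j 0 (fun _ => le_refl 0) rfl
  simpa [hWcol j] using this

lemma kappa_le_dist' {d r : ℕ} (W : Matrix (Fin d) (Fin r) ℝ) (j₁ j₂ : Fin r) (h : j₁ ≠ j₂) :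
    kappa W ≤ l1 (fun i => W i j₁ - W i j₂) := by
  have := kappa_le' W j₁ (fun k => if k = j₂ then 1 else 0)
    (fun k => by positivity) (by simp [h])
  simpa using this

lemma omegaW_le_dist' {d r : ℕ} (W : Matrix (Fin d) (Fin r) ℝ) (j₁ j₂ : Fin r) (h : j₁ ≠ j₂) :
    omegaW W ≤ l1 (fun i => W i j₁ - W i j₂) :=
  csInf_le ⟨0, by rintro c ⟨a, b, _, rfl⟩; exact l1_nonneg' _⟩ ⟨j₁, j₂, h, rfl⟩

lemma kappa_le_omegaW' {d r : ℕ} (W : Matrix (Fin d) (Fin r) ℝ)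
    (h : ∃ j₁ j₂ : Fin r, j₁ ≠ j₂) : kappa W ≤ omegaW W := by
  obtain ⟨j₁, j₂, hne⟩ := h
  refine le_csInf ⟨_, j₁, j₂, hne, rfl⟩ ?_
  rintro c ⟨a, b, hab, rfl⟩
  exact kappa_le_dist' W a b hab

lemma omegaW_le_two' {d r : ℕ} (W : Matrix (Fin d) (Fin r) ℝ)
    (hWcol : ∀ j, l1 (fun i => W i j) = 1) (j₁ j₂ : Fin r) (h : j₁ ≠ j₂) :
    omegaW W ≤ 2 := by
  have h1 := omegaW_le_dist' W j₁ j₂ h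
  have h2 : l1 (fun i => W i j₁ - W i j₂) ≤ l1 (fun i => W i j₁) + l1 (fun i => W i j₂) := by
    rw [l1, l1, l1, ← Finset.sum_add_distrib]
    exact Finset.sum_le_sum fun i _ => abs_sub _ _
  rw [hWcol j₁, hWcol j₂] at h2
  linarith

lemma omegaW_zero' {d r : ℕ} (W : Matrix (Fin d) (Fin r) ℝ) (hr : r ≤ 1) : omegaW W = 0 := by
  rw [omegaW]
  convert Real.sInf_empty
  rw [Set.eq_empty_iff_forall_notMem]
  rintro c ⟨j₁, j₂, hne, -⟩
  have h1 := j₁.2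
  have h2 := j₂.2
  exact hne (Fin.ext (by omega))

lemma kappa_zero' {d r : ℕ} (W : Matrix (Fin d) (Fin r) ℝ) (hr : r = 0) : kappa W = 0 := by
  rw [kappa]
  convert Real.sInf_empty
  rw [Set.eq_empty_iff_forall_notMem]
  rintro c ⟨j, -⟩
  have := j.2
  omega
set_option maxHeartbeats 1000000 in
/-- F = F̄_1 ∪ ⋯ ∪ F̄_r, and clusters from distinct components are disjoint. -/
theorem F_decomposition
    {d r m : ℕ} (W : Matrix (Fin d) (Fin r) ℝ) (Hbar : Matrix (Fin r) (Fin m) ℝ)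
    (σ : Equiv.Perm (Fin r ⊕ Fin m))
    (N A V : Matrix (Fin d) (Fin r ⊕ Fin m) ℝ)
    (H : Matrix (Fin r) (Fin r ⊕ Fin m) ℝ) (ε : ℝ)
    (hW : ∀ i j, 0 ≤ W i j) (hHbar : ∀ i j, 0 ≤ Hbar i j)
    (hH : H = fun j u => Matrix.fromCols (1 : Matrix (Fin r) (Fin r) ℝ) Hbar j (σ u))
    (hV : V = W * H) (hA : A = V + N)
    (hVcol : ∀ u, l1 (fun i => V i u) = 1)
    (hWcol : ∀ j, l1 (fun i => W i j) = 1)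
    (hHcol : ∀ u, l1 (fun j => H j u) = 1)
    (hε0 : 0 ≤ ε) (hN : ml1 N ≤ ε)
    (Xopt : Matrix (Fin r ⊕ Fin m) (Fin r ⊕ Fin m) ℝ)
    (hfeas : Feas Xopt r)
    (hopt : ∀ X : Matrix (Fin r ⊕ Fin m) (Fin r ⊕ Fin m) ℝ,
      Feas X r → ml1 (A - A * Xopt) ≤ ml1 (A - A * X))
    (μ : ℝ)
    (hcase :
      (ε < kappa W * omegaW W / (578 * (r + 1)) ∧
        ∃ ξ : ℝ, 0 < ξ ∧ ξ < kappa W / 35 ∧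
          μ = 17 * (r + 1) * ε / kappa W + ξ) ∨
      (ε < (kappa W) ^ 2 / (289 * (r + 1) ^ 2) ∧
        ∃ ξ : ℝ, 0 < ξ ∧ ξ < kappa W / 35 ∧ μ = Real.sqrt ε + ξ))
    (p : Fin r ⊕ Fin m → ℝ) (hp : p = fun u => Xopt u u) :
    (∀ S : Finset (Fin r ⊕ Fin m),
      (∃ i, S ∈ FsetC A μ r p i) ↔ ∃ j : Fin r, S ∈ FbarC A W μ p j) ∧
    (∀ x y : Fin r, x ≠ y →
      ∀ Sx ∈ FbarC A W μ p x, ∀ Sy ∈ FbarC A W μ p y, ∀ u ∈ Sx, u ∉ Sy) := by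
  classical
  obtain ⟨htr, hd1, hnn, hdom⟩ := hfeas
  -- r ≥ 1
  have hr1 : 1 ≤ r := by
    by_contra hc
    have h0 : r = 0 := by omega
    have hκ0 : kappa W = 0 := kappa_zero' W h0
    have hω0 : omegaW W = 0 := omegaW_zero' W (by omega)
    rcases hcase with ⟨hε, -⟩ | ⟨hε, -⟩
    · rw [hκ0, hω0] at hε; norm_num at hε; linarith
    · rw [hκ0] at hε; norm_num at hε; linarith
  haveI : Nonempty (Fin r ⊕ Fin m) := ⟨Sum.inl ⟨0, hr1⟩⟩
  have hκ1 : kappa W ≤ 1 := kappa_le_one' W ⟨0, hr1⟩ hWcol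
  have hκnn := kappa_nonneg' W
  have hωnn := omegaW_nonneg' W
  have hrr : (1:ℝ) ≤ (r:ℝ) := by exact_mod_cast hr1
  have hR2 : (2:ℝ) ≤ (r:ℝ) + 1 := by linarith
  have hR0 : (0:ℝ) < (r:ℝ) + 1 := by linarith
  -- main numeric facts
  have hmain : 0 < kappa W ∧ ε ≤ 1/578 ∧ ε ≤ μ ∧ 0 < μ ∧ μ < 1 ∧
      ((2312/577*ε/kappa W + 2312/577*ε) * ((r:ℝ)+1) ≤ μ/2) ∧
      ((∃ j₁ j₂ : Fin r, j₁ ≠ j₂) → 16*μ < omegaW W) := by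
    rcases hcase with ⟨hε, ξ, hξ0, hξκ, hμeq⟩ | ⟨hε, ξ, hξ0, hξκ, hμeq⟩
    · -- case 1
      have hr2 : 2 ≤ r := by
        by_contra hc
        have h1 : omegaW W = 0 := omegaW_zero' W (by omega)
        rw [h1] at hε; norm_num at hε; linarith
      have hR3 : (3:ℝ) ≤ (r:ℝ) + 1 := by
        have : (2:ℝ) ≤ (r:ℝ) := by exact_mod_cast hr2
        linarith
      have hpair : ∃ j₁ j₂ : Fin r, j₁ ≠ j₂ :=
        ⟨⟨0, by omega⟩, ⟨1, by omega⟩, by simp [Fin.ext_iff]⟩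
      have hω2 : omegaW W ≤ 2 := by
        obtain ⟨j₁, j₂, hne⟩ := hpair
        exact omegaW_le_two' W hWcol j₁ j₂ hne
      have hκω := kappa_le_omegaW' W hpair
      have hεκω : ε * (578*((r:ℝ)+1)) < kappa W * omegaW W := by
        rw [lt_div_iff₀ (by positivity)] at hε; exact hε
      have hε578R : 0 ≤ ε * (578*((r:ℝ)+1)) := mul_nonneg hε0 (by linarith)
      have hprod : 0 < kappa W * omegaW W := by linarith only [hεκω, hε578R]
      have hκpos : 0 < kappa W := by
        rcases lt_or_eq_of_le hκnn with h | h
        · exact h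
        · rw [← h] at hprod; simp at hprod
      have hκω2 : kappa W * omegaW W ≤ 2 := by
        nlinarith only [hκ1, hω2, hκnn, hωnn]
      have hε578 : ε ≤ 1/578 := by
        have h1 : ε * 1734 ≤ ε * (578*((r:ℝ)+1)) :=
          mul_le_mul_of_nonneg_left (by linarith) hε0
        linarith only [h1, hεκω, hκω2]
      have hE0 : 0 ≤ ε / kappa W := by positivity
      have hEε : ε ≤ ε / kappa W := by
        rw [le_div_iff₀ hκpos]
        have := mul_le_mul_of_nonneg_left hκ1 hε0
        linarith only [this]
      have hμE : μ = 17*((r:ℝ)+1)*(ε / kappa W) + ξ := by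
        rw [hμeq]; ring
      have htermE : 17*((r:ℝ)+1)*(ε / kappa W) < omegaW W/34 := by
        rw [← mul_div_assoc, div_lt_div_iff₀ hκpos (by norm_num)]
        linarith only [hεκω]
      have hξω : ξ < omegaW W/35 := lt_of_lt_of_le hξκ (by linarith)
      have hμ34 : μ < omegaW W/34 + omegaW W/35 := by rw [hμE]; linarith
      have hERnn : 0 ≤ 17*((r:ℝ)+1)*(ε / kappa W) :=
        mul_nonneg (mul_nonneg (by norm_num) (le_of_lt hR0)) hE0
      have hμpos : 0 < μ := by rw [hμE]; linarith only [hERnn, hξ0]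
      refine ⟨hκpos, hε578, ?_, hμpos, ?_, ?_, ?_⟩
      · -- ε ≤ μ
        have h1 : 0 ≤ (ε / kappa W) * (17*((r:ℝ)+1) - 1) :=
          mul_nonneg hE0 (by linarith)
        rw [hμE]; nlinarith only [h1, hξ0, hEε]
      · -- μ < 1
        linarith only [hμ34, hω2, hωnn]
      · -- key inequality
        have h1 : 2312/577*ε/kappa W = 2312/577*(ε/kappa W) := by ring
        rw [h1, hμE]
        have h2 : ε*((r:ℝ)+1) ≤ (ε/kappa W)*((r:ℝ)+1) :=
          mul_le_mul_of_nonneg_right hEε (le_of_lt hR0)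
        have h3 : 0 ≤ (ε/kappa W)*((r:ℝ)+1) := mul_nonneg hE0 (le_of_lt hR0)
        nlinarith only [h2, h3, hξ0]
      · intro _
        linarith only [hμ34, hωnn]
    · -- case 2
      have hκpos : 0 < kappa W := by
        rcases lt_or_eq_of_le hκnn with h | h
        · exact h
        · rw [← h] at hε; norm_num at hε; linarith
      set s := Real.sqrt ε with hsdef
      have hs0 : 0 ≤ s := Real.sqrt_nonneg ε
      have hs2 : s^2 = ε := Real.sq_sqrt hε0
      have hεs : ε < (kappa W / (17*((r:ℝ)+1)))^2 := by
        have heq : kappa W^2/(289*((r:ℝ)+1)^2) = (kappa W / (17*((r:ℝ)+1)))^2 := by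
          rw [div_pow]; congr 1; ring
        rw [← heq]; exact hε
      have hsκ : s < kappa W / (17*((r:ℝ)+1)) := by
        rw [hsdef, Real.sqrt_lt' (by positivity)]; exact hεs
      have hε578 : ε ≤ 1/578 := by
        have h1 : ε*(289*((r:ℝ)+1)^2) < kappa W^2 := by
          rw [lt_div_iff₀ (by positivity)] at hε; exact hε
        have hκ2 : kappa W^2 ≤ 1 := by nlinarith only [hκ1, hκnn]
        have hR4 : (4:ℝ) ≤ ((r:ℝ)+1)^2 := by nlinarith only [hR2]
        have h2 : ε*1156 ≤ ε*(289*((r:ℝ)+1)^2) :=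
          mul_le_mul_of_nonneg_left (by linarith) hε0
        linarith only [h1, h2, hκ2]
      have hs1 : s ≤ 1 := by nlinarith only [hs2, hs0, hε578, sq_nonneg (s-1)]
      have hεls : ε ≤ s := by
        have := mul_nonneg hs0 (by linarith : (0:ℝ) ≤ 1 - s)
        nlinarith only [this, hs2]
      have hμpos : 0 < μ := by rw [hμeq]; linarith only [hs0, hξ0]
      have hsκ34 : s < kappa W / 34 := by
        have h1 : kappa W / (17*((r:ℝ)+1)) ≤ kappa W / 34 := by
          rw [div_le_div_iff₀ (by positivity) (by norm_num)]
          have := mul_nonneg hκnn (show (0:ℝ) ≤ 17*((r:ℝ)+1) - 34 by linarith)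
          nlinarith only [this]
        linarith only [h1, hsκ]
      refine ⟨hκpos, hε578, ?_, hμpos, ?_, ?_, ?_⟩
      · rw [hμeq]; linarith only [hεls, hξ0]
      · rw [hμeq]; linarith only [hsκ34, hξκ, hκ1]
      · -- key inequality
        have h17 : s * (17*((r:ℝ)+1)) < kappa W := by
          rw [lt_div_iff₀ (by positivity)] at hsκ
          linarith only [hsκ]
        have hprod := mul_le_mul_of_nonneg_left h17.le hs0
        have hs2R : s*(s*(17*((r:ℝ)+1))) = ε*(17*((r:ℝ)+1)) := by rw [← hs2]; ring
        have hE17 : ε*(17*((r:ℝ)+1)) ≤ s*kappa W := by rw [← hs2R]; exact hprod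
        have hdivF : ε/kappa W ≤ s/(17*((r:ℝ)+1)) := by
          rw [div_le_div_iff₀ hκpos (by positivity)]
          linarith only [hE17]
        have hFR : (ε/kappa W)*((r:ℝ)+1) ≤ s/17 := by
          have h5 := mul_le_mul_of_nonneg_right hdivF (le_of_lt hR0)
          have heq : (s/(17*((r:ℝ)+1)))*((r:ℝ)+1) = s/17 := by
            field_simp
          linarith only [h5, heq]
        have hEε : ε ≤ ε/kappa W := by
          rw [le_div_iff₀ hκpos]
          have := mul_le_mul_of_nonneg_left hκ1 hε0
          linarith only [this]
        have h2 : ε*((r:ℝ)+1) ≤ (ε/kappa W)*((r:ℝ)+1) :=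
          mul_le_mul_of_nonneg_right hEε (le_of_lt hR0)
        have h1 : 2312/577*ε/kappa W = 2312/577*(ε/kappa W) := by ring
        rw [h1, hμeq]
        nlinarith only [hFR, h2, hξ0, hs0]
      · intro hpair
        have hκω := kappa_le_omegaW' W hpair
        rw [hμeq]
        linarith only [hsκ34, hξκ, hκω, hκnn]
  obtain ⟨hκpos, hε578, hεμ, hμpos, hμ1, hkey, hμω⟩ := hmain
  -- H facts
  have hHap : ∀ j u, H j u = Matrix.fromCols 1 Hbar j (σ u) := fun j u => by rw [hH]
  have hH0 : ∀ j u, 0 ≤ H j u := by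
    intro j u
    rw [hHap]
    rcases hsu : σ u with j' | k'
    · rw [Matrix.fromCols_apply_inl, Matrix.one_apply]
      split <;> norm_num
    · rw [Matrix.fromCols_apply_inr]; exact hHbar _ _
  have hHsum : ∀ u, ∑ j, H j u = 1 := by
    intro u
    have h := hHcol u
    rw [l1] at h
    rw [← h]
    exact Finset.sum_congr rfl fun j _ => (abs_of_nonneg (hH0 j u)).symm
  have hHle1 : ∀ j u, H j u ≤ 1 := by
    intro j u
    rw [← hHsum u]
    exact Finset.single_le_sum (fun j' _ => hH0 j' u) (Finset.mem_univ j)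
  set π : Fin r → Fin r ⊕ Fin m := fun j => σ.symm (Sum.inl j) with hπdef
  have hHπ : ∀ j j', H j' (π j) = if j' = j then 1 else 0 := by
    intro j j'
    rw [hHap, hπdef]
    simp only [Equiv.apply_symm_apply, Matrix.fromCols_apply_inl]
    rw [Matrix.one_apply]
  -- V facts
  have hVap : ∀ k u, V k u = ∑ j, W k j * H j u := fun k u => by
    rw [hV, Matrix.mul_apply]
  have hV0 : ∀ k u, 0 ≤ V k u := by
    intro k u; rw [hVap]
    exact Finset.sum_nonneg fun j _ => mul_nonneg (hW k j) (hH0 j u)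
  have hVsum : ∀ u, ∑ k, V k u = 1 := by
    intro u
    have h := hVcol u
    rw [l1] at h
    rw [← h]
    exact Finset.sum_congr rfl fun k _ => (abs_of_nonneg (hV0 k u)).symm
  have hVπ : ∀ k j, V k (π j) = W k j := by
    intro k j
    rw [hVap]
    have h4 : ∀ j', W k j' * H j' (π j) = if j' = j then W k j' else 0 := by
      intro j'; rw [hHπ]; split <;> simp
    rw [Finset.sum_congr rfl fun j' _ => h4 j', Finset.sum_ite_eq' Finset.univ j (fun j' => W k j')]
    simp
  have hAap : ∀ k u, A k u = V k u + N k u := fun k u => by rw [hA]; rfl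
  have hNcol : ∀ u, l1 (fun k => N k u) ≤ ε := fun u => le_trans (col_le_ml1' N u) hN
  -- the comparison matrix X₀
  set X₀ : Matrix (Fin r ⊕ Fin m) (Fin r ⊕ Fin m) ℝ :=
    Matrix.of (fun u v => Sum.elim (fun j => H j v) (fun _ => (0:ℝ)) (σ u)) with hX₀def
  have hX₀ap : ∀ u v, X₀ u v = Sum.elim (fun j => H j v) (fun _ => (0:ℝ)) (σ u) :=
    fun u v => rfl
  have hreidx : ∀ (v : Fin r ⊕ Fin m) (g : (Fin r ⊕ Fin m) → ℝ),
      ∑ u, g u * X₀ u v = ∑ j, g (π j) * H j v := by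
    intro v g
    rw [← Equiv.sum_comp σ.symm (fun u => g u * X₀ u v), Fintype.sum_sum_type]
    simp only [hX₀ap, Equiv.apply_symm_apply, Sum.elim_inl, Sum.elim_inr, mul_zero,
      Finset.sum_const_zero, add_zero, hπdef]
  have htrX₀ : ∑ u, X₀ u u = (r:ℝ) := by
    rw [← Equiv.sum_comp σ.symm (fun u => X₀ u u), Fintype.sum_sum_type]
    simp only [hX₀ap, Equiv.apply_symm_apply, Sum.elim_inl, Sum.elim_inr,
      Finset.sum_const_zero, add_zero]
    have h5 : ∀ j : Fin r, H j (σ.symm (Sum.inl j)) = 1 := by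
      intro j
      have h := hHπ j j
      rw [if_pos rfl] at h
      exact h
    rw [Finset.sum_congr rfl fun j _ => h5 j]
    simp
  have hX₀col : ∀ v, ∑ u, X₀ u v = 1 := by
    intro v
    have h := hreidx v (fun _ => 1)
    simp only [one_mul] at h
    rw [h, hHsum v]
  have hX₀0 : ∀ u v, 0 ≤ X₀ u v := by
    intro u v
    rw [hX₀ap]
    rcases hsu : σ u with j | k
    · exact hH0 j v
    · exact le_refl 0
  have hfeasX₀ : Feas X₀ r := by
    refine ⟨?_, ?_, hX₀0, ?_⟩
    · show Matrix.trace X₀ = (r:ℝ)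
      rw [Matrix.trace]
      exact htrX₀
    · intro u
      rw [hX₀ap]
      rcases hsu : σ u with j | k
      · exact hHle1 j u
      · norm_num
    · intro u v
      rw [hX₀ap, hX₀ap]
      rcases hsu : σ u with j | k
      · show H j v ≤ H j u
        have hu : π j = u := by
          simp only [hπdef]
          rw [← hsu, Equiv.symm_apply_apply]
        have : H j u = 1 := by
          rw [← hu]
          have := hHπ j j
          rwa [if_pos rfl] at this
        rw [this]
        exact hHle1 j v
      · exact le_refl 0
  -- the optimal solution has small residual
  have hAX₀ : ∀ v, l1 (fun k => (A - A * X₀) k v) ≤ 2*ε := by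
    intro v
    have hexp : ∀ k, (A - A * X₀) k v = N k v - ∑ u, X₀ u v * N k u := by
      intro k
      rw [Matrix.sub_apply, Matrix.mul_apply]
      have h1 : ∑ u, A k u * X₀ u v = V k v + ∑ u, X₀ u v * N k u := by
        have h2 : ∀ u, A k u * X₀ u v = V k u * X₀ u v + N k u * X₀ u v := by
          intro u; rw [hAap k u]; ring
        rw [Finset.sum_congr rfl fun u _ => h2 u, Finset.sum_add_distrib]
        congr 1
        · rw [hreidx v (fun u => V k u), Finset.sum_congr rfl fun j _ => by rw [hVπ k j]]
          exact (hVap k v).symm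
        · exact Finset.sum_congr rfl fun u _ => mul_comm _ _
      rw [h1, hAap k v]
      ring
    have hcal : l1 (fun k => (A - A * X₀) k v) =
        l1 (fun k => N k v - ∑ u, X₀ u v * N k u) := by
      congr 1
      funext k
      exact hexp k
    rw [hcal]
    have h3 : l1 (fun k => N k v - ∑ u, X₀ u v * N k u) ≤
        l1 (fun k => N k v) + l1 (fun k => ∑ u, X₀ u v * N k u) := by
      have := l1_add_le' (fun k => N k v) (fun k => -(∑ u, X₀ u v * N k u))
      have heq : l1 (fun k => -(∑ u, X₀ u v * N k u)) = l1 (fun k => ∑ u, X₀ u v * N k u) := by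
        simp only [l1, abs_neg]
      rw [heq] at this
      refine le_trans (le_of_eq ?_) this
      simp only [sub_eq_add_neg]
    have h4 : l1 (fun k => ∑ u, X₀ u v * N k u) ≤ ε := by
      refine le_trans (l1_sum_le' Finset.univ (fun u => X₀ u v) (fun u k => N k u)) ?_
      have h5 : ∀ u, |X₀ u v| * l1 (fun k => N k u) ≤ X₀ u v * ε := by
        intro u
        rw [abs_of_nonneg (hX₀0 u v)]
        exact mul_le_mul_of_nonneg_left (hNcol u) (hX₀0 u v)
      refine le_trans (Finset.sum_le_sum fun u _ => h5 u) ?_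
      rw [← Finset.sum_mul, hX₀col v, one_mul]
    linarith [hNcol v, h3, h4]
  have hml1opt : ml1 (A - A * Xopt) ≤ 2*ε :=
    le_trans (hopt X₀ hfeasX₀) (ml1_le' fun v => hAX₀ v)
  have hrescol : ∀ v, l1 (fun k => A k v - (A * Xopt) k v) ≤ 2*ε := by
    intro v
    have h := col_le_ml1' (A - A * Xopt) v
    have heq : (fun i => (A - A * Xopt) i v) = fun i => A i v - (A * Xopt) i v := by
      funext i; rw [Matrix.sub_apply]
    rw [heq] at h
    exact le_trans h hml1opt
  -- column sums of Xopt
  have hqsum : ∑ u, Xopt u u = (r:ℝ) := by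
    rw [← htr, Matrix.trace]
    rfl
  have hTv : ∀ v, ∑ u, Xopt u v ≤ 1 + 2312/577*ε := by
    intro v
    have hT0 : (0:ℝ) ≤ ∑ u, Xopt u v := Finset.sum_nonneg fun u _ => hnn u v
    have hAX : ∀ k, (A * Xopt) k v = (∑ u, V k u * Xopt u v) + ∑ u, N k u * Xopt u v := by
      intro k
      rw [Matrix.mul_apply, ← Finset.sum_add_distrib]
      refine Finset.sum_congr rfl fun u _ => ?_
      rw [hAap k u]; ring
    have hVX : l1 (fun k => ∑ u, V k u * Xopt u v) = ∑ u, Xopt u v := by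
      rw [l1]
      calc ∑ k, |∑ u, V k u * Xopt u v| = ∑ k, ∑ u, V k u * Xopt u v :=
            Finset.sum_congr rfl fun k _ => abs_of_nonneg
              (Finset.sum_nonneg fun u _ => mul_nonneg (hV0 k u) (hnn u v))
        _ = ∑ u, (∑ k, V k u) * Xopt u v := by
            rw [Finset.sum_comm]
            exact Finset.sum_congr rfl fun u _ => (Finset.sum_mul _ _ _).symm
        _ = ∑ u, Xopt u v := Finset.sum_congr rfl fun u _ => by rw [hVsum u, one_mul]
    have hNX : l1 (fun k => ∑ u, Xopt u v * N k u) ≤ ε * ∑ u, Xopt u v := by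
      refine le_trans (l1_sum_le' Finset.univ (fun u => Xopt u v) (fun u k => N k u)) ?_
      have h5 : ∀ u, |Xopt u v| * l1 (fun k => N k u) ≤ Xopt u v * ε := by
        intro u
        rw [abs_of_nonneg (hnn u v)]
        exact mul_le_mul_of_nonneg_left (hNcol u) (hnn u v)
      refine le_trans (Finset.sum_le_sum fun u _ => h5 u) (le_of_eq ?_)
      rw [← Finset.sum_mul]
      ring
    have hAv : l1 (fun k => A k v) ≤ 1 + ε := by
      have h := l1_add_le' (fun k => V k v) (fun k => N k v)
      rw [hVcol v] at h
      have heq : l1 (fun k => A k v) = l1 (fun k => V k v + N k v) := by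
        congr 1; funext k; exact hAap k v
      rw [heq]
      linarith [hNcol v]
    have hAXle : l1 (fun k => (A * Xopt) k v) ≤ 1 + 3*ε := by
      have h := l1_le_of_sub' (fun k => (A * Xopt) k v) (fun k => A k v)
      have h2 : l1 (fun k => (A * Xopt) k v - A k v) = l1 (fun k => A k v - (A * Xopt) k v) :=
        l1_sub_comm' _ _
      rw [h2] at h
      linarith [hrescol v, hAv]
    have hVXle : l1 (fun k => ∑ u, V k u * Xopt u v) ≤
        l1 (fun k => (A * Xopt) k v) + ε * ∑ u, Xopt u v := by
      have h := l1_le_of_sub' (fun k => ∑ u, V k u * Xopt u v) (fun k => (A * Xopt) k v)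
      have h2 : l1 (fun k => (∑ u, V k u * Xopt u v) - (A * Xopt) k v) =
          l1 (fun k => ∑ u, Xopt u v * N k u) := by
        rw [l1, l1]
        refine Finset.sum_congr rfl fun k _ => ?_
        rw [hAX k, show (∑ u, V k u * Xopt u v) - ((∑ u, V k u * Xopt u v) + ∑ u, N k u * Xopt u v)
          = -(∑ u, N k u * Xopt u v) by ring, abs_neg]
        congr 1
        exact Finset.sum_congr rfl fun u _ => mul_comm _ _
      rw [h2] at h
      linarith [hNX]
    have h7 : ∑ u, Xopt u v ≤ 1 + 3*ε + ε * ∑ u, Xopt u v := by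
      have h8 := hVXle
      rw [hVX] at h8
      linarith [hAXle]
    have h1ε : (0:ℝ) < 1 - ε := by linarith
    nlinarith only [h7, hε0, hT0, hε578,
      mul_le_mul_of_nonneg_left hε578 (show (0:ℝ) ≤ 2312/577 by norm_num), h1ε]
  -- the diagonal of H·Xopt restricted to pure columns is close to 1
  have hydiag : ∀ j : Fin r, 1 - 2312/577*ε/kappa W ≤ ∑ u, H j u * Xopt u (π j) := by
    intro j
    set v := π j with hvdef
    set y : Fin r → ℝ := fun j' => ∑ u, H j' u * Xopt u v with hydef
    show 1 - 2312/577*ε/kappa W ≤ y j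
    have hy0 : ∀ j', 0 ≤ y j' := by
      intro j'
      rw [hydef]
      exact Finset.sum_nonneg fun u _ => mul_nonneg (hH0 j' u) (hnn u v)
    have hyeq : ∀ k, ∑ u, V k u * Xopt u v = ∑ j', W k j' * y j' := by
      intro k
      rw [Finset.sum_congr rfl fun u (_ : u ∈ Finset.univ) => by rw [hVap k u, Finset.sum_mul]]
      rw [Finset.sum_comm]
      refine Finset.sum_congr rfl fun j' _ => ?_
      rw [hydef]
      simp only
      rw [Finset.mul_sum]
      exact Finset.sum_congr rfl fun u _ => by ring
    have hAX : ∀ k, (A * Xopt) k v = (∑ u, V k u * Xopt u v) + ∑ u, N k u * Xopt u v := by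
      intro k
      rw [Matrix.mul_apply, ← Finset.sum_add_distrib]
      refine Finset.sum_congr rfl fun u _ => ?_
      rw [hAap k u]; ring
    have hNX : l1 (fun k => ∑ u, Xopt u v * N k u) ≤ ε * ∑ u, Xopt u v := by
      refine le_trans (l1_sum_le' Finset.univ (fun u => Xopt u v) (fun u k => N k u)) ?_
      have h5 : ∀ u, |Xopt u v| * l1 (fun k => N k u) ≤ Xopt u v * ε := by
        intro u
        rw [abs_of_nonneg (hnn u v)]
        exact mul_le_mul_of_nonneg_left (hNcol u) (hnn u v)
      refine le_trans (Finset.sum_le_sum fun u _ => h5 u) (le_of_eq ?_)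
      rw [← Finset.sum_mul]
      ring
    have hWa : l1 (fun k => W k j - A k v) ≤ ε := by
      have heq : (fun k => W k j - A k v) = (fun k => -(N k v)) := by
        funext k
        rw [hvdef, hAap k (π j), hVπ k j]
        ring
      rw [heq]
      have h2 : l1 (fun k => -(N k v)) = l1 (fun k => N k v) := by
        simp only [l1, abs_neg]
      rw [h2]
      exact hNcol v
    have hWy : l1 (fun k => W k j - ∑ j', W k j' * y j') ≤ 2312/577 * ε := by
      have hT := hTv v
      have hT0 : (0:ℝ) ≤ ∑ u, Xopt u v := Finset.sum_nonneg fun u _ => hnn u v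
      have t1 := l1_tri' (fun k => W k j) (fun k => A k v) (fun k => ∑ j', W k j' * y j')
      have t2 := l1_tri' (fun k => A k v) (fun k => (A * Xopt) k v) (fun k => ∑ j', W k j' * y j')
      have t3 : l1 (fun k => (A * Xopt) k v - ∑ j', W k j' * y j')
          = l1 (fun k => ∑ u, Xopt u v * N k u) := by
        congr 1
        funext k
        rw [hAX k, ← hyeq k]
        have hcd : ∑ u, Xopt u v * N k u = ∑ u, N k u * Xopt u v :=
          Finset.sum_congr rfl fun u _ => mul_comm _ _
        rw [hcd]
        ring
      have hres := hrescol v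
      have h6 : ε * (∑ u, Xopt u v) ≤ ε * (1 + 2312/577*ε) := mul_le_mul_of_nonneg_left hT hε0
      have h7 : ε * ε ≤ ε * (1/578) := mul_le_mul_of_nonneg_left hε578 hε0
      rw [t3] at t2
      nlinarith only [t1, t2, hWa, hres, hNX, h6, h7, hε0]
    by_cases hyj : 1 ≤ y j
    · have h8 : 0 ≤ 2312/577*ε/kappa W := by positivity
      linarith
    · push_neg at hyj
      have ht0 : 0 < 1 - y j := by linarith
      set z : Fin r → ℝ := fun j' => (if j' = j then 0 else y j') / (1 - y j) with hzdef
      have hz0 : ∀ k, 0 ≤ z k := by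
        intro k
        rw [hzdef]
        simp only
        apply div_nonneg _ ht0.le
        split
        · exact le_refl 0
        · exact hy0 k
      have hzj : z j = 0 := by rw [hzdef]; simp
      have hκle := kappa_le' W j z hz0 hzj
      have hid : ∀ k, W k j - ∑ j', W k j' * y j'
          = (1 - y j) * (W k j - ∑ j', W k j' * z j') := by
        intro k
        have h4 : ∀ j', W k j' * z j' = (if j' = j then 0 else W k j' * y j') / (1 - y j) := by
          intro j'
          rw [hzdef]
          simp only
          split
          · simp
          · rw [mul_div_assoc]
        rw [Finset.sum_congr rfl fun j' (_ : j' ∈ Finset.univ) => h4 j', ← Finset.sum_div]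
        have h5 : ∑ j', (if j' = j then 0 else W k j' * y j')
            = (∑ j', W k j' * y j') - W k j * y j := by
          have h6 : ∀ j', (if j' = j then 0 else W k j' * y j')
              = W k j' * y j' - (if j' = j then W k j' * y j' else 0) := by
            intro j'; split <;> ring
          rw [Finset.sum_congr rfl fun j' (_ : j' ∈ Finset.univ) => h6 j',
            Finset.sum_sub_distrib,
            Finset.sum_ite_eq' Finset.univ j (fun j' => W k j' * y j')]
          simp
        rw [h5]
        field_simp
        ring
      have hl1id : l1 (fun k => W k j - ∑ j', W k j' * y j')
          = (1 - y j) * l1 (fun k => W k j - ∑ j', W k j' * z j') := by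
        rw [← l1_smul' (1 - y j) _ ht0.le]
        congr 1
        funext k
        exact hid k
      have hfin : kappa W * (1 - y j) ≤ 2312/577 * ε := by
        have h7 : kappa W * (1 - y j)
            ≤ l1 (fun k => W k j - ∑ j', W k j' * z j') * (1 - y j) :=
          mul_le_mul_of_nonneg_right hκle ht0.le
        rw [hl1id] at hWy
        nlinarith only [h7, hWy]
      have h8 : (1 - y j) ≤ 2312/577*ε/kappa W := by
        rw [le_div_iff₀ hκpos]
        nlinarith only [hfin]
      linarith only [h8]
  -- anchor sets
  set Tset : Fin r → Finset (Fin r ⊕ Fin m) :=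
    fun j => Finset.univ.filter (fun u => 1 - μ/2 ≤ H j u) with hTsetdef
  have hmass : ∀ j, (r:ℝ)/((r:ℝ)+1) ≤ ∑ u ∈ Tset j, Xopt u u := by
    intro j
    have hy := hydiag j
    have hsplit := Finset.sum_filter_add_sum_filter_not Finset.univ
      (fun u => 1 - μ/2 ≤ H j u) (fun u => H j u * Xopt u (π j))
    have hsplitX := Finset.sum_filter_add_sum_filter_not Finset.univ
      (fun u => 1 - μ/2 ≤ H j u) (fun u => Xopt u (π j))
    have h1 : ∑ u ∈ Finset.univ.filter (fun u => 1 - μ/2 ≤ H j u), H j u * Xopt u (π j)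
        ≤ ∑ u ∈ Finset.univ.filter (fun u => 1 - μ/2 ≤ H j u), Xopt u (π j) := by
      refine Finset.sum_le_sum fun u _ => ?_
      have h0 := mul_le_mul_of_nonneg_right (hHle1 j u) (hnn u (π j))
      simpa using h0
    have h2 : ∑ u ∈ Finset.univ.filter (fun u => ¬(1 - μ/2 ≤ H j u)), H j u * Xopt u (π j)
        ≤ (1 - μ/2) * ∑ u ∈ Finset.univ.filter (fun u => ¬(1 - μ/2 ≤ H j u)), Xopt u (π j) := by
      rw [Finset.mul_sum]
      refine Finset.sum_le_sum fun u hu => ?_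
      have hlt : H j u < 1 - μ/2 := lt_of_not_ge (Finset.mem_filter.mp hu).2
      exact mul_le_mul_of_nonneg_right hlt.le (hnn u (π j))
    have hT := hTv (π j)
    have hAjX : ∑ u ∈ Finset.univ.filter (fun u => 1 - μ/2 ≤ H j u), Xopt u (π j)
        ≤ ∑ u ∈ Finset.univ.filter (fun u => 1 - μ/2 ≤ H j u), Xopt u u :=
      Finset.sum_le_sum fun u _ => hdom u (π j)
    set Aj := ∑ u ∈ Finset.univ.filter (fun u => 1 - μ/2 ≤ H j u), Xopt u (π j) with hAjdef
    set Bj := ∑ u ∈ Finset.univ.filter (fun u => ¬(1 - μ/2 ≤ H j u)), Xopt u (π j) with hBjdef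
    have hkey2 : (2312/577*ε/kappa W + 2312/577*ε) ≤ (μ/2) / ((r:ℝ)+1) := by
      rw [le_div_iff₀ hR0]; exact hkey
    have hfrac : (μ/2) - (μ/2)/((r:ℝ)+1) = (μ/2) * ((r:ℝ)/((r:ℝ)+1)) := by
      field_simp
      ring
    have hc1 : 1 - 2312/577*ε/kappa W ≤ Aj + (1 - μ/2) * Bj := by
      linarith only [hy, hsplit, h1, h2]
    have hc2 : (1 - μ/2) * Bj ≤ (1 - μ/2) * (1 + 2312/577*ε - Aj) := by
      apply mul_le_mul_of_nonneg_left _ (by linarith only [hμ1] : (0:ℝ) ≤ 1 - μ/2)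
      linarith only [hsplitX, hT]
    have hμε : 0 ≤ μ * ε := mul_nonneg hμpos.le hε0
    have hc3 : (μ/2) - (2312/577*ε/kappa W + 2312/577*ε) ≤ (μ/2) * Aj := by
      nlinarith only [hc1, hc2, hμε]
    have hc4 : (μ/2) * ((r:ℝ)/((r:ℝ)+1)) ≤ (μ/2) * Aj := by
      linarith only [hc3, hkey2, hfrac]
    have hgoal : (r:ℝ)/((r:ℝ)+1) ≤ Aj :=
      le_of_mul_le_mul_left (by linarith only [hc4]) (by linarith only [hμpos] : (0:ℝ) < μ/2)
    have hfinal := le_trans hgoal hAjX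
    simpa only [hTsetdef] using hfinal
  have hdisjT : ∀ (a b : Fin r), a ≠ b → Disjoint (Tset a) (Tset b) := by
    intro a b hne
    rw [Finset.disjoint_left]
    intro u hu hu'
    simp only [hTsetdef, Finset.mem_filter] at hu hu'
    have h3 : H a u + H b u ≤ 1 := by
      have h4 : H a u + H b u = ∑ x ∈ ({a, b} : Finset (Fin r)), H x u :=
        (Finset.sum_pair (f := fun x => H x u) hne).symm
      rw [h4, ← hHsum u]
      exact Finset.sum_le_sum_of_subset_of_nonneg (Finset.subset_univ _)
        (fun x _ _ => hH0 x u)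
    linarith only [h3, hu.2, hu'.2, hμ1]
  have hfarb : ∑ u ∈ Finset.univ \ Finset.univ.biUnion Tset, Xopt u u ≤ (r:ℝ)/((r:ℝ)+1) := by
    have hsd : ∑ u ∈ Finset.univ \ Finset.univ.biUnion Tset, Xopt u u
        + ∑ u ∈ Finset.univ.biUnion Tset, Xopt u u = (r:ℝ) := by
      rw [Finset.sum_sdiff (Finset.subset_univ _)]
      exact hqsum
    have hpd : Set.PairwiseDisjoint (↑(Finset.univ : Finset (Fin r))) Tset :=
      fun a _ b _ hne => hdisjT a b hne
    have hub : ∑ u ∈ Finset.univ.biUnion Tset, Xopt u u = ∑ j, ∑ u ∈ Tset j, Xopt u u :=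
      Finset.sum_biUnion hpd
    have h2 : (r:ℝ) * ((r:ℝ)/((r:ℝ)+1)) ≤ ∑ u ∈ Finset.univ.biUnion Tset, Xopt u u := by
      rw [hub]
      calc (r:ℝ) * ((r:ℝ)/((r:ℝ)+1)) = ∑ _j : Fin r, (r:ℝ)/((r:ℝ)+1) := by
            rw [Finset.sum_const, Finset.card_univ, Fintype.card_fin, nsmul_eq_mul]
        _ ≤ ∑ j, ∑ u ∈ Tset j, Xopt u u := Finset.sum_le_sum fun j _ => hmass j
    have h3 : (r:ℝ) - (r:ℝ)*((r:ℝ)/((r:ℝ)+1)) = (r:ℝ)/((r:ℝ)+1) := by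
      field_simp
      ring
    linarith only [hsd, h2, h3]
  have hdistT : ∀ j, ∀ u ∈ Tset j, l1 (fun k => A k u - W k j) ≤ 2*μ := by
    intro j u hu
    have hHu : 1 - μ/2 ≤ H j u := by
      simp only [hTsetdef, Finset.mem_filter] at hu
      exact hu.2
    have hdec : ∀ k, A k u - W k j
        = (∑ j', (H j' u - if j' = j then 1 else 0) * W k j') + N k u := by
      intro k
      rw [hAap k u, hVap k u]
      have h4 : ∀ j', (H j' u - if j' = j then 1 else 0) * W k j'
          = W k j' * H j' u - (if j' = j then W k j' else 0) := by
        intro j'; split <;> ring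
      rw [Finset.sum_congr rfl fun j' (_ : j' ∈ Finset.univ) => h4 j', Finset.sum_sub_distrib,
        Finset.sum_ite_eq' Finset.univ j (fun j' => W k j')]
      simp only [Finset.mem_univ, if_true]
      ring
    have hcal : l1 (fun k => A k u - W k j) =
        l1 (fun k => (∑ j', (H j' u - if j' = j then 1 else 0) * W k j') + N k u) := by
      congr 1
      funext k
      exact hdec k
    rw [hcal]
    have h5 := l1_add_le' (fun k => ∑ j', (H j' u - if j' = j then 1 else 0) * W k j')
      (fun k => N k u)
    have h6 := l1_sum_le' Finset.univ (fun j' => H j' u - if j' = j then 1 else 0)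
      (fun j' k => W k j')
    have h7 : ∑ j', |H j' u - if j' = j then 1 else 0| * l1 (fun k => W k j')
        = ∑ j', |H j' u - if j' = j then 1 else 0| := by
      refine Finset.sum_congr rfl fun j' _ => ?_
      rw [hWcol j', mul_one]
    have h8 : ∑ j', |H j' u - if j' = j then 1 else 0| = (1 - H j u) + (1 - H j u) := by
      rw [Finset.sum_eq_sum_sdiff_singleton_add (Finset.mem_univ j)
        (fun j' => |H j' u - if j' = j then 1 else 0|)]
      have h9 : ∀ j' ∈ Finset.univ \ {j}, |H j' u - if j' = j then 1 else 0| = H j' u := by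
        intro j' hj'
        have hne : j' ≠ j := by simpa using (Finset.mem_sdiff.mp hj').2
        rw [if_neg hne, sub_zero, abs_of_nonneg (hH0 j' u)]
      rw [Finset.sum_congr rfl h9, if_pos rfl]
      have h10 : |H j u - 1| = 1 - H j u := by
        rw [abs_of_nonpos (by linarith only [hHle1 j u])]
        ring
      have h11 : ∑ j' ∈ Finset.univ \ {j}, H j' u = 1 - H j u := by
        have h12 := Finset.sum_eq_sum_sdiff_singleton_add (Finset.mem_univ j) (fun j' => H j' u)
        have h13 := hHsum u
        linarith only [h12, h13]
      rw [h10, h11]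
    have hNu := hNcol u
    linarith only [h5, h6, h7, h8, hNu, hHu, hεμ]
  -- extracting the diameter bound
  have hdiam : ∀ (i : Fin r ⊕ Fin m) (S : Finset (Fin r ⊕ Fin m)),
      S ∈ FsetC A μ r p i → ∀ u ∈ S, l1 (fun k => A k i - A k u) ≤ 3*μ := by
    intro i S hS u hu
    have hd := hS.2.1
    rw [diamC] at hd
    have hmem : cdist A i u ∈ {x | ∃ u ∈ S, x = cdist A i u} := ⟨u, hu, rfl⟩
    have hfin : BddAbove {x | ∃ u ∈ S, x = cdist A i u} := by
      have heq : {x | ∃ u ∈ S, x = cdist A i u} = (fun u => cdist A i u) '' ↑S := by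
        ext x
        simp [eq_comm]
      rw [heq]
      exact (S.finite_toSet.image _).bddAbove
    have hle := le_trans (le_csSup hfin hmem) hd
    rw [cdist] at hle
    exact hle
  constructor
  · intro S
    constructor
    · rintro ⟨i, hS⟩
      have hscore : (r:ℝ)/((r:ℝ)+1) < ∑ u ∈ S, Xopt u u := by
        have h := hS.2.2
        simpa [scoreS, hp] using h
      have hSU : ∃ u₀ ∈ S, u₀ ∈ Finset.univ.biUnion Tset := by
        by_contra hc
        push_neg at hc
        have hsub : S ⊆ Finset.univ \ Finset.univ.biUnion Tset := by
          intro u hu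
          exact Finset.mem_sdiff.mpr ⟨Finset.mem_univ u, hc u hu⟩
        have hle : ∑ u ∈ S, Xopt u u
            ≤ ∑ u ∈ Finset.univ \ Finset.univ.biUnion Tset, Xopt u u :=
          Finset.sum_le_sum_of_subset_of_nonneg hsub (fun u _ _ => hnn u u)
        linarith only [hle, hfarb, hscore]
      obtain ⟨u₀, hu₀S, hu₀U⟩ := hSU
      obtain ⟨j, -, hu₀T⟩ := Finset.mem_biUnion.mp hu₀U
      refine ⟨j, ⟨i, hS⟩, ?_⟩
      intro u hu
      have d1 := hdiam i S hS u hu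
      have d2 := hdiam i S hS u₀ hu₀S
      have d3 := hdistT j u₀ hu₀T
      have t1 := l1_tri' (fun k => A k u) (fun k => A k u₀) (fun k => W k j)
      have t2 := l1_tri' (fun k => A k u) (fun k => A k i) (fun k => A k u₀)
      have c1 : l1 (fun k => A k u - A k i) = l1 (fun k => A k i - A k u) := l1_sub_comm' _ _
      linarith only [t1, t2, c1, d1, d2, d3]
    · rintro ⟨j, hj⟩
      exact hj.1
  · intro x y hxy Sx hSx Sy hSy u huX huY
    have dX := hSx.2 u huX
    have dY := hSy.2 u huY
    have hω := hμω ⟨x, y, hxy⟩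
    have hωd := omegaW_le_dist' W x y hxy
    have t1 := l1_tri' (fun k => W k x) (fun k => A k u) (fun k => W k y)
    have c1 : l1 (fun k => W k x - A k u) = l1 (fun k => A k u - W k x) := l1_sub_comm' _ _
    linarith only [t1, c1, dX, dY, hω, hωd]
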